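/- Let ν_1,...,ν_k ∈ ℝ^d and λ ∈ ℝ^k have nonnegative coordinates with λ_1 + ... + λ_k = 1, and set ν = Σ_i λ_i ν_i. Then for every x > 0, every μ ∈ ℝ^d with nonnegative coordinates, and all x_1,...,x_k ∈ (0,x], there exists i ∈ {1,...,k} with λ_i > 0 such that the vector μ_i = (1 − x_iλ_i)·μ + x_iλ_i·ν_i satisfies ‖μ_i‖² ≤ ‖μ‖² + λ_i x_i·((2‖ν‖/‖μ‖ − 2 + x‖λ‖²)·‖μ‖² + x·Σ_i λ_i²‖ν_i‖²). -/

import Mathlib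

open RealInnerProductSpace

lemma exists_le_weighted {k : ℕ} (lam g : Fin k → ℝ) (hlam : ∀ i, 0 ≤ lam i)
    (hsum : ∑ i, lam i = 1) : ∃ i, 0 < lam i ∧ g i ≤ ∑ j, lam j * g j := by
  by_contra h
  push_neg at h
  have h1 : ∀ j ∈ Finset.univ, lam j * (∑ j, lam j * g j) ≤ lam j * g j := by
    intro j _
    rcases (hlam j).lt_or_eq with hj | hj
    · exact mul_le_mul_of_nonneg_left (h j hj).le (hlam j)
    · simp [← hj]
  have hex : ∃ j, 0 < lam j := by
    by_contra hc; push_neg at hc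
    have : ∀ j, lam j = 0 := fun j => le_antisymm (hc j) (hlam j)
    simp [this] at hsum
  obtain ⟨j0, hj0⟩ := hex
  have hstrict : lam j0 * (∑ j, lam j * g j) < lam j0 * g j0 :=
    mul_lt_mul_of_pos_left (h j0 hj0) hj0
  have := Finset.sum_lt_sum h1 ⟨j0, Finset.mem_univ _, hstrict⟩
  rw [← Finset.sum_mul, hsum, one_mul] at this
  exact lt_irrefl _ this

theorem stmt_7 (d k : ℕ) (ν : Fin k → EuclideanSpace ℝ (Fin d))
    (lam : Fin k → ℝ) (hν : ∀ i j, 0 ≤ ν i j) (hlam : ∀ i, 0 ≤ lam i)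
    (hsum : ∑ i, lam i = 1)
    (μ : EuclideanSpace ℝ (Fin d)) (hμ : ∀ j, 0 ≤ μ j) (hμ0 : μ ≠ 0)
    (x : ℝ) (hx : 0 < x) (xi : Fin k → ℝ) (hxi : ∀ i, 0 < xi i ∧ xi i ≤ x) :
    ∃ i : Fin k, 0 < lam i ∧
      ‖(1 - xi i * lam i) • μ + (xi i * lam i) • ν i‖ ^ 2
        ≤ ‖μ‖ ^ 2 + lam i * xi i *
            ((2 * ‖∑ j, lam j • ν j‖ / ‖μ‖ - 2 + x * ∑ j, (lam j) ^ 2) * ‖μ‖ ^ 2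
              + x * ∑ j, (lam j) ^ 2 * ‖ν j‖ ^ 2) := by
  classical
  have hinn : ∀ i, (0:ℝ) ≤ ⟪μ, ν i⟫ := by
    intro i
    rw [PiLp.inner_apply]
    exact Finset.sum_nonneg fun j _ => by
      simpa using mul_nonneg (hν i j) (hμ j)
  set g : Fin k → ℝ := fun i => 2 * ⟪μ, ν i⟫ + lam i * xi i * ‖ν i - μ‖ ^ 2 with hg
  obtain ⟨i, hip, hile⟩ := exists_le_weighted lam g hlam hsum
  refine ⟨i, hip, ?_⟩
  have hμn : (0:ℝ) < ‖μ‖ := norm_pos_iff.mpr hμ0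
  -- bound the weighted sum
  have hCS : ⟪μ, ∑ j, lam j • ν j⟫ ≤ ‖μ‖ * ‖∑ j, lam j • ν j‖ :=
    real_inner_le_norm _ _
  have hinnsum : ⟪μ, ∑ j, lam j • ν j⟫ = ∑ j, lam j * ⟪μ, ν j⟫ := by
    rw [inner_sum]
    exact Finset.sum_congr rfl fun j _ => real_inner_smul_right _ _ _
  have hsubbd : ∀ j, ‖ν j - μ‖ ^ 2 ≤ ‖ν j‖ ^ 2 + ‖μ‖ ^ 2 := by
    intro j
    have := norm_sub_sq_real (ν j) μ
    nlinarith [hinn j, real_inner_comm μ (ν j)]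
  have hSbd : ∑ j, lam j * g j ≤
      2 * ‖μ‖ * ‖∑ j, lam j • ν j‖ +
        x * ((∑ j, (lam j) ^ 2) * ‖μ‖ ^ 2 + ∑ j, (lam j) ^ 2 * ‖ν j‖ ^ 2) := by
    have hterm : ∀ j ∈ Finset.univ, lam j * g j ≤
        2 * (lam j * ⟪μ, ν j⟫) + x * ((lam j)^2 * ‖μ‖^2 + (lam j)^2 * ‖ν j‖^2) := by
      intro j _
      have h1 : lam j * (lam j * xi j * ‖ν j - μ‖ ^ 2) ≤
          x * ((lam j)^2 * ‖μ‖^2 + (lam j)^2 * ‖ν j‖^2) := by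
        have ha : xi j * ‖ν j - μ‖ ^ 2 ≤ x * (‖ν j‖ ^ 2 + ‖μ‖ ^ 2) :=
          mul_le_mul (hxi j).2 (hsubbd j) (sq_nonneg _) hx.le
        nlinarith [mul_le_mul_of_nonneg_left ha (sq_nonneg (lam j))]
      have : lam j * g j = 2 * (lam j * ⟪μ, ν j⟫) + lam j * (lam j * xi j * ‖ν j - μ‖ ^ 2) := by
        simp [hg]; ring
      rw [this]
      linarith
    calc ∑ j, lam j * g j
        ≤ ∑ j, (2 * (lam j * ⟪μ, ν j⟫) + x * ((lam j)^2 * ‖μ‖^2 + (lam j)^2 * ‖ν j‖^2)) :=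
          Finset.sum_le_sum hterm
      _ = 2 * (∑ j, lam j * ⟪μ, ν j⟫) +
          x * ((∑ j, (lam j) ^ 2) * ‖μ‖ ^ 2 + ∑ j, (lam j) ^ 2 * ‖ν j‖ ^ 2) := by
          simp [Finset.sum_add_distrib, Finset.mul_sum, Finset.sum_mul, mul_add]
      _ ≤ _ := by
          rw [← hinnsum]
          nlinarith [hCS]
  -- expand the LHS norm
  set t : ℝ := xi i * lam i with ht
  have htpos : 0 < t := mul_pos (hxi i).1 hip
  have hrew : (1 - t) • μ + t • ν i = μ + t • (ν i - μ) := by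
    rw [smul_sub, sub_smul, one_smul]; abel
  have hexp : ‖(1 - t) • μ + t • ν i‖ ^ 2 =
      ‖μ‖ ^ 2 + t * (g i - 2 * ‖μ‖ ^ 2) := by
    rw [hrew, norm_add_sq_real, real_inner_smul_right, inner_sub_right,
      norm_smul, real_inner_self_eq_norm_sq]
    simp [hg, ht, mul_pow, abs_of_pos (hxi i).1, abs_of_pos hip]
    ring
  rw [hexp]
  have hdiv : 2 * ‖∑ j, lam j • ν j‖ / ‖μ‖ * ‖μ‖ ^ 2 = 2 * ‖μ‖ * ‖∑ j, lam j • ν j‖ := by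
    field_simp
  have hgi : g i ≤ 2 * ‖μ‖ * ‖∑ j, lam j • ν j‖ +
      x * ((∑ j, (lam j) ^ 2) * ‖μ‖ ^ 2 + ∑ j, (lam j) ^ 2 * ‖ν j‖ ^ 2) :=
    hile.trans hSbd
  have hkey : t * (g i - 2 * ‖μ‖ ^ 2) ≤ lam i * xi i *
      ((2 * ‖∑ j, lam j • ν j‖ / ‖μ‖ - 2 + x * ∑ j, (lam j) ^ 2) * ‖μ‖ ^ 2
        + x * ∑ j, (lam j) ^ 2 * ‖ν j‖ ^ 2) := by
    have : (2 * ‖∑ j, lam j • ν j‖ / ‖μ‖ - 2 + x * ∑ j, (lam j) ^ 2) * ‖μ‖ ^ 2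
        + x * ∑ j, (lam j) ^ 2 * ‖ν j‖ ^ 2 =
        (2 * ‖μ‖ * ‖∑ j, lam j • ν j‖ +
          x * ((∑ j, (lam j) ^ 2) * ‖μ‖ ^ 2 + ∑ j, (lam j) ^ 2 * ‖ν j‖ ^ 2))
          - 2 * ‖μ‖ ^ 2 := by
      have hne : ‖μ‖ ≠ 0 := hμn.ne'
      field_simp
      ring
    rw [this, ht]
    have := mul_le_mul_of_nonneg_left (sub_le_sub_right hgi (2 * ‖μ‖ ^ 2)) htpos.le
    rw [ht] at this
    linarith [this]
  linarith [hkey]
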